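/- The associated scalar curvature satisfies τ* = (2ω₁ − θ₁)ω₂. -/

import Mathlib

noncomputable section

/-- `V = ℝ³`. -/
abbrev V : Type := Fin 3 → ℝ

/-- The standard basis `e₀, e₁, e₂` of `V = ℝ³`. -/
def e : Fin 3 → V := fun i => Pi.single i 1

/-- The B-metric `g`: the symmetric bilinear form with
`g(e₀,e₀) = g(e₁,e₁) = 1`, `g(e₂,e₂) = -1`, `g(eᵢ,eⱼ) = 0` for `i ≠ j`. -/
def gB (x y : V) : ℝ := x 0 * y 0 + x 1 * y 1 - x 2 * y 2

/-- The linear map `φ` with `φe₀ = 0`, `φe₁ = e₂`, `φe₂ = -e₁`. -/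
def phi : V → V := fun x => ![0, -(x 2), x 1]

/-- The 1-form `η` with `η(e₀) = 1`, `η(e₁) = η(e₂) = 0`. -/
def eta (x : V) : ℝ := x 0

/-- The signs `ε₀ = ε₁ = 1`, `ε₂ = -1`. -/
def eps : Fin 3 → ℝ := ![1, 1, -1]

/-- The curvature tensor `R(x,y)z = ∇ₓ(∇ᵧz) − ∇ᵧ(∇ₓz) − ∇_{[x,y]}z`. -/
def Rc (br nabla : V →ₗ[ℝ] V →ₗ[ℝ] V) (x y z : V) : V :=
  nabla x (nabla y z) - nabla y (nabla x z) - nabla (br x y) z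

/-- The curvature tensor of type (0,4): `R(x,y,z,w) = g(R(x,y)z, w)`. -/
def R4 (br nabla : V →ₗ[ℝ] V →ₗ[ℝ] V) (x y z w : V) : ℝ :=
  gB (Rc br nabla x y z) w

/-- The Ricci tensor `ρ(y,z) = R(e₀,y,z,e₀) + R(e₁,y,z,e₁) − R(e₂,y,z,e₂)`. -/
def ric (br nabla : V →ₗ[ℝ] V →ₗ[ℝ] V) (y z : V) : ℝ :=
  R4 br nabla (e 0) y z (e 0) + R4 br nabla (e 1) y z (e 1) - R4 br nabla (e 2) y z (e 2)

/-- The scalar curvature `τ = ρ(e₀,e₀) + ρ(e₁,e₁) − ρ(e₂,e₂)`. -/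
def scal (br nabla : V →ₗ[ℝ] V →ₗ[ℝ] V) : ℝ :=
  ric br nabla (e 0) (e 0) + ric br nabla (e 1) (e 1) - ric br nabla (e 2) (e 2)

/-- The associated Ricci tensor
`ρ*(y,z) = R(e₀,y,z,φe₀) + R(e₁,y,z,φe₁) − R(e₂,y,z,φe₂)`. -/
def ricStar (br nabla : V →ₗ[ℝ] V →ₗ[ℝ] V) (y z : V) : ℝ :=
  R4 br nabla (e 0) y z (phi (e 0)) + R4 br nabla (e 1) y z (phi (e 1))
    - R4 br nabla (e 2) y z (phi (e 2))

/-- The associated scalar curvature `τ* = ρ*(e₀,e₀) + ρ*(e₁,e₁) − ρ*(e₂,e₂)`. -/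
def scalStar (br nabla : V →ₗ[ℝ] V →ₗ[ℝ] V) : ℝ :=
  ricStar br nabla (e 0) (e 0) + ricStar br nabla (e 1) (e 1) - ricStar br nabla (e 2) (e 2)

/-- The covariant derivative of `φ`: `(∇φ)(x,y) = ∇ₓ(φy) − φ(∇ₓy)`. -/
def nablaPhi (nabla : V →ₗ[ℝ] V →ₗ[ℝ] V) (x y : V) : V :=
  nabla x (phi y) - phi (nabla x y)

/-- The square norm `‖∇φ‖² = Σ_{i,k} εᵢεₖ g((∇φ)(eᵢ,eₖ), (∇φ)(eᵢ,eₖ))`. -/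
def normNablaPhiSq (nabla : V →ₗ[ℝ] V →ₗ[ℝ] V) : ℝ :=
  ∑ i : Fin 3, ∑ k : Fin 3,
    eps i * eps k * gB (nablaPhi nabla (e i) (e k)) (nablaPhi nabla (e i) (e k))

lemma vext (v w : V) (h0 : v 0 = w 0) (h1 : v 1 = w 1) (h2 : v 2 = w 2) : v = w := by
  funext i; fin_cases i <;> assumption

lemma vdecomp (v : V) : v = v 0 • e 0 + v 1 • e 1 + v 2 • e 2 := by
  apply vext <;> simp [e, Pi.single_apply]

/-- the associated scalar curvature `τ* = (2ω₁ − θ₁)ω₂`. -/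
theorem statement8
    (θ₁ θ₂ ω₁ ω₂ : ℝ) (hcomm : θ₁ * ω₂ = θ₂ * ω₁)
    (br : V →ₗ[ℝ] V →ₗ[ℝ] V)
    (hskew : ∀ x y : V, br x y = - br y x)
    (h01 : br (e 0) (e 1) = (-ω₂) • e 0)
    (h02 : br (e 0) (e 2) = ω₁ • e 0)
    (h12 : br (e 1) (e 2) = ((1/2) * θ₁) • e 1 + ((1/2) * θ₂) • e 2)
    (nabla : V →ₗ[ℝ] V →ₗ[ℝ] V)
    (hKoszul : ∀ x y z : V, 2 * gB (nabla x y) z =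
      gB (br x y) z + gB (br z x) y + gB (br z y) x) :
    scalStar br nabla = (2 * ω₁ - θ₁) * ω₂ := by
  have hdiag : ∀ x : V, br x x = 0 := by
    intro x
    have h2 : (2:ℝ) • br x x = 0 := by
      rw [two_smul]; nth_rewrite 1 [hskew x x]; simp
    simpa using (smul_eq_zero.mp h2).resolve_left (by norm_num)
  have h10 : br (e 1) (e 0) = ω₂• e 0 := by
    rw [hskew, h01]; module
  have h20 : br (e 2) (e 0) = (-ω₁) • e 0 := by
    rw [hskew, h02]; module
  have h21 : br (e 2) (e 1) = (-((1/2) * θ₁)) • e 1 + (-((1/2) * θ₂)) • e 2 := by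
    rw [hskew, h12]; module
  have hbr : ∀ x y : V, br x y =
      ![-ω₂*(x 0*y 1 - x 1*y 0) + ω₁*(x 0*y 2 - x 2*y 0),
        (1/2)*θ₁*(x 1*y 2 - x 2*y 1), (1/2)*θ₂*(x 1*y 2 - x 2*y 1)] := by
    intro x y
    conv_lhs => rw [vdecomp x, vdecomp y]
    simp only [map_add, map_smul, LinearMap.add_apply, LinearMap.smul_apply,
      h01, h02, h12, h10, h20, h21, hdiag]
    apply vext <;>
      simp [e, Pi.single_apply] <;> ring
  have hn : ∀ x y : V, nabla x y =
      ![-ω₂*(x 0*y 1) + ω₁*(x 0*y 2),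
        ω₂*(x 0*y 0) + (1/2)*θ₁*(x 1*y 2) - (1/2)*θ₂*(x 2*y 2),
        ω₁*(x 0*y 0) + (1/2)*θ₁*(x 1*y 1) - (1/2)*θ₂*(x 2*y 1)] := by
    intro x y
    have hk0 := hKoszul x y (e 0)
    have hk1 := hKoszul x y (e 1)
    have hk2 := hKoszul x y (e 2)
    rw [hbr] at hk0 hk1 hk2
    rw [hbr (e 0) x, hbr (e 0) y] at hk0
    rw [hbr (e 1) x, hbr (e 1) y] at hk1
    rw [hbr (e 2) x, hbr (e 2) y] at hk2
    simp only [gB, e, Pi.single_apply, Matrix.cons_val] at hk0 hk1 hk2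
    norm_num [Fin.ext_iff] at hk0 hk1 hk2
    apply vext <;> simp only [Matrix.cons_val_zero, Matrix.cons_val_one,
      Matrix.head_cons, Matrix.cons_val_two, Matrix.tail_cons, Matrix.cons_val] at hk0 hk1 hk2 ⊢
    · linear_combination hk0 / 2
    · linear_combination hk1 / 2
    · linear_combination -hk2 / 2
  simp only [scalStar, ricStar, R4, Rc, hbr, hn, gB, phi, e, Pi.single_apply, Pi.sub_apply, Matrix.cons_val]
  norm_num [Fin.ext_iff]
  linear_combination ω₂ * hcomm - hcomm * ω₂ + hcomm / 2
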